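/- For ADAPD iterates, if η < 1/(2L), then for all k ≥ 0: L_η(X^{k+1}, X0^k; Y^k, Z^k) − L_η(X^k, X0^k; Y^k, Z^k) ≤ ((2Lη − 1)/(2η)) ‖X^{k+1} − X^k‖_F² + ε_{k+1}/(2L). -/

import Mathlib

open Matrix Finset

attribute [local instance] Matrix.frobeniusNormedAddCommGroup Matrix.frobeniusNormedSpace

noncomputable section

variable {N p : ℕ}

/-- Frobenius inner product on `N × p` real matrices. -/
def frobInner (A B : Matrix (Fin N) (Fin p) ℝ) : ℝ := ∑ i, ∑ j, A i j * B i j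

/-- Squared Frobenius norm. -/
def frobSq (A : Matrix (Fin N) (Fin p) ℝ) : ℝ := frobInner A A

/-- Frobenius norm. -/
def frobNorm (A : Matrix (Fin N) (Fin p) ℝ) : ℝ := Real.sqrt (frobInner A A)

/-- The continuous linear functional `H ↦ ⟨G, H⟩_F`. -/
def frobCLM (G : Matrix (Fin N) (Fin p) ℝ) : Matrix (Fin N) (Fin p) ℝ →L[ℝ] ℝ :=
  LinearMap.toContinuousLinearMap
    { toFun := fun H => frobInner G H
      map_add' := by
        intro x y
        simp [frobInner, Matrix.add_apply, mul_add, Finset.sum_add_distrib]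
      map_smul' := by
        intro c x
        simp [frobInner, Matrix.smul_apply, Finset.mul_sum]
        ring_nf
        apply Finset.sum_congr rfl; intro i _
        apply Finset.sum_congr rfl; intro j _; ring }

/-- Spectral norm (operator 2-norm) of a square real matrix. -/
def specNorm {N : ℕ} (M : Matrix (Fin N) (Fin N) ℝ) : ℝ :=
  ‖Matrix.toEuclideanCLM (𝕜 := ℝ) M‖

/-- The all-ones `N × N` matrix. -/
def onesMat (N : ℕ) : Matrix (Fin N) (Fin N) ℝ := fun _ _ => 1

/-- Quadratic form `‖A‖_M² := ⟨A, M A⟩_F` for a symmetric `M` (possibly negative). -/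
def quadForm (M : Matrix (Fin N) (Fin N) ℝ) (A : Matrix (Fin N) (Fin p) ℝ) : ℝ :=
  frobInner A (M * A)

/-- Augmented Lagrangian `L_η(X, X0; Y, Z)`, where `S` plays the role of `√(I−W)`. -/
def Lag (F : Matrix (Fin N) (Fin p) ℝ → ℝ) (S : Matrix (Fin N) (Fin N) ℝ) (η : ℝ)
    (X X0 Y Z : Matrix (Fin N) (Fin p) ℝ) : ℝ :=
  F X + frobInner Y (X - X0) + (2*η)⁻¹ * frobSq (X - X0)
    + frobInner Z (S * X0) + (2*η)⁻¹ * frobSq (S * X0)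

lemma frobInner_comm (A B : Matrix (Fin N) (Fin p) ℝ) : frobInner A B = frobInner B A := by
  simp [frobInner, mul_comm]

lemma frobInner_add_right (A B C : Matrix (Fin N) (Fin p) ℝ) :
    frobInner A (B + C) = frobInner A B + frobInner A C := by
  simp [frobInner, Matrix.add_apply, mul_add, Finset.sum_add_distrib]

lemma frobInner_sub_right (A B C : Matrix (Fin N) (Fin p) ℝ) :
    frobInner A (B - C) = frobInner A B - frobInner A C := by
  simp [frobInner, Matrix.sub_apply, mul_sub, Finset.sum_sub_distrib]

lemma frobInner_smul_right (c : ℝ) (A B : Matrix (Fin N) (Fin p) ℝ) :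
    frobInner A (c • B) = c * frobInner A B := by
  simp [frobInner, Matrix.smul_apply, smul_eq_mul, Finset.mul_sum, mul_left_comm]

lemma frobInner_add_left (A B C : Matrix (Fin N) (Fin p) ℝ) :
    frobInner (A + B) C = frobInner A C + frobInner B C := by
  rw [frobInner_comm, frobInner_add_right, frobInner_comm C A, frobInner_comm C B]

lemma frobInner_sub_left (A B C : Matrix (Fin N) (Fin p) ℝ) :
    frobInner (A - B) C = frobInner A C - frobInner B C := by
  rw [frobInner_comm, frobInner_sub_right, frobInner_comm C A, frobInner_comm C B]

lemma frobInner_smul_left (c : ℝ) (A B : Matrix (Fin N) (Fin p) ℝ) :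
    frobInner (c • A) B = c * frobInner A B := by
  rw [frobInner_comm, frobInner_smul_right, frobInner_comm]

lemma frobSq_nonneg (A : Matrix (Fin N) (Fin p) ℝ) : 0 ≤ frobSq A := by
  unfold frobSq frobInner
  apply Finset.sum_nonneg; intro i _
  apply Finset.sum_nonneg; intro j _
  exact mul_self_nonneg _

lemma frobNorm_nonneg (A : Matrix (Fin N) (Fin p) ℝ) : 0 ≤ frobNorm A := Real.sqrt_nonneg _

lemma frobNorm_mul_self (A : Matrix (Fin N) (Fin p) ℝ) : frobNorm A * frobNorm A = frobSq A :=
  Real.mul_self_sqrt (frobSq_nonneg A)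

lemma frobSq_add (A B : Matrix (Fin N) (Fin p) ℝ) :
    frobSq (A + B) = frobSq A + 2 * frobInner A B + frobSq B := by
  simp only [frobSq, frobInner_add_left, frobInner_add_right, frobInner_comm B A]; ring

lemma frobSq_smul (c : ℝ) (A : Matrix (Fin N) (Fin p) ℝ) :
    frobSq (c • A) = c^2 * frobSq A := by
  simp only [frobSq, frobInner_smul_left, frobInner_smul_right]; ring

lemma frobNorm_smul (c : ℝ) (A : Matrix (Fin N) (Fin p) ℝ) :
    frobNorm (c • A) = |c| * frobNorm A := by
  rw [frobNorm, frobNorm]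
  have : frobInner (c • A) (c • A) = c^2 * frobInner A A := frobSq_smul c A
  rw [this, Real.sqrt_mul (sq_nonneg c), Real.sqrt_sq_eq_abs]

lemma frob_cauchy_schwarz (A B : Matrix (Fin N) (Fin p) ℝ) :
    frobInner A B ≤ frobNorm A * frobNorm B := by
  have h := Real.sum_mul_le_sqrt_mul_sqrt (Finset.univ : Finset (Fin N × Fin p))
    (fun x => A x.1 x.2) (fun x => B x.1 x.2)
  have e1 : frobInner A B = ∑ x : Fin N × Fin p, A x.1 x.2 * B x.1 x.2 :=
    (Fintype.sum_prod_type (f := fun x : Fin N × Fin p => A x.1 x.2 * B x.1 x.2)).symm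
  have e2 : frobInner A A = ∑ x : Fin N × Fin p, (A x.1 x.2)^2 := by
    rw [show (∑ x : Fin N × Fin p, (A x.1 x.2)^2) = ∑ i, ∑ j, (A i j)^2 from
      Fintype.sum_prod_type (f := fun x : Fin N × Fin p => (A x.1 x.2)^2), frobInner]
    simp [sq]
  have e3 : frobInner B B = ∑ x : Fin N × Fin p, (B x.1 x.2)^2 := by
    rw [show (∑ x : Fin N × Fin p, (B x.1 x.2)^2) = ∑ i, ∑ j, (B i j)^2 from
      Fintype.sum_prod_type (f := fun x : Fin N × Fin p => (B x.1 x.2)^2), frobInner]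
    simp [sq]
  rw [e1, frobNorm, frobNorm, e2, e3]
  exact h

lemma frob_young (Lc : ℝ) (hLc : 0 < Lc) (A B : Matrix (Fin N) (Fin p) ℝ) :
    frobInner A B ≤ (2*Lc)⁻¹ * frobSq A + Lc/2 * frobSq B := by
  have h := frobSq_nonneg (A - Lc • B)
  have e : frobSq (A - Lc • B) = frobSq A - 2*Lc*frobInner A B + Lc^2 * frobSq B := by
    have : A - Lc • B = A + (-Lc) • B := by module
    rw [this, frobSq_add, frobSq_smul, frobInner_smul_right]; ring
  rw [e] at h
  rw [div_eq_mul_inv, ← sub_nonneg]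
  have h2 : 0 ≤ (2*Lc)⁻¹ * (frobSq A - 2*Lc*frobInner A B + Lc^2 * frobSq B) := by positivity
  calc 0 ≤ (2*Lc)⁻¹ * (frobSq A - 2*Lc*frobInner A B + Lc^2 * frobSq B) := h2
    _ = (2*Lc)⁻¹ * frobSq A + Lc * 2⁻¹ * frobSq B - frobInner A B := by
        field_simp; ring
lemma descent_lemma (L : ℝ) (hL : 0 < L)
    (F : Matrix (Fin N) (Fin p) ℝ → ℝ) (G : Matrix (Fin N) (Fin p) ℝ → Matrix (Fin N) (Fin p) ℝ)
    (hgrad : ∀ U, HasFDerivAt F (frobCLM (G U)) U)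
    (hLip : ∀ U V, frobNorm (G U - G V) ≤ L * frobNorm (U - V))
    (U V : Matrix (Fin N) (Fin p) ℝ) :
    F V - F U - frobInner (G V) (V - U) ≤ L/2 * frobSq (V - U) := by
  set Δ := V - U with hΔ
  set c := frobInner (G V) Δ with hc
  set q := frobSq Δ with hq
  set φ : ℝ → ℝ := fun t => F (U + t • Δ) + L/2 * (1-t)^2 * q - t * c with hφ
  have hline : ∀ t : ℝ, HasDerivAt (fun s : ℝ => U + s • Δ) Δ t := by
    intro t
    have := ((hasDerivAt_id' t).smul_const Δ).const_add U
    rwa [one_smul] at this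
  have hder : ∀ t : ℝ, HasDerivAt φ (frobInner (G (U + t • Δ)) Δ - L*(1-t)*q - c) t := by
    intro t
    have h2 : HasDerivAt (fun s : ℝ => F (U + s • Δ)) (frobInner (G (U + t • Δ)) Δ) t := by
      have := (hgrad (U + t • Δ)).comp_hasDerivAt t (hline t)
      exact this
    have h3 : HasDerivAt (fun s : ℝ => L/2 * (1-s)^2 * q) (-(L*(1-t)*q)) t := by
      have ha : HasDerivAt (fun s : ℝ => (1:ℝ) - s) (-1) t := by
        simpa using (hasDerivAt_id t).const_sub 1
      have hb := ((ha.pow 2).const_mul (L/2)).mul_const q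
      exact hb.congr_deriv (by ring)
    have h4 : HasDerivAt (fun s : ℝ => s * c) c t := by
      simpa using (hasDerivAt_id t).mul_const c
    have hfin := (h2.add h3).sub h4
    exact hfin.congr_deriv (by ring)
  have hmono : AntitoneOn φ (Set.Icc (0:ℝ) 1) := by
    apply antitoneOn_of_deriv_nonpos (convex_Icc 0 1)
    · exact fun x _ => (hder x).continuousAt.continuousWithinAt
    · exact fun x _ => (hder x).differentiableAt.differentiableWithinAt
    · intro x hx
      rw [interior_Icc] at hx
      rw [(hder x).deriv]
      have key : frobInner (G (U + x • Δ)) Δ - c ≤ L*(1-x)*q := by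
        have e : frobInner (G (U + x • Δ)) Δ - c = frobInner (G (U + x • Δ) - G V) Δ := by
          rw [frobInner_sub_left, hc]
        rw [e]
        calc frobInner (G (U + x • Δ) - G V) Δ
            ≤ frobNorm (G (U + x • Δ) - G V) * frobNorm Δ := frob_cauchy_schwarz _ _
          _ ≤ (L * frobNorm (U + x • Δ - V)) * frobNorm Δ :=
              mul_le_mul_of_nonneg_right (hLip _ _) (frobNorm_nonneg _)
          _ = L * (1-x) * q := by
              have e2 : U + x • Δ - V = (x - 1) • Δ := by
                rw [hΔ]; module
              rw [e2, frobNorm_smul, abs_of_nonpos (by linarith [hx.2.le]), hq,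
                ← frobNorm_mul_self]
              ring
      linarith
  have h01 := hmono (Set.left_mem_Icc.mpr zero_le_one) (Set.right_mem_Icc.mpr zero_le_one)
    zero_le_one
  have e0 : φ 0 = F U + L/2 * q := by simp [hφ]
  have e1 : φ 1 = F V - c := by
    have hUV : U + Δ = V := by rw [hΔ]; abel
    simp [hφ, hUV]
  rw [e0, e1] at h01
  linarith
/-- Lemma: descent in the `X`-update of ADAPD. -/
theorem adapd_x_decrease (N p : ℕ) (hN : 0 < N) (hp : 0 < p)
    -- mixing matrix assumptions
    (W : Matrix (Fin N) (Fin N) ℝ) (hWsym : Wᵀ = W)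
    (hWub : Matrix.PosSemidef (1 - W)) (hWlb : Matrix.PosDef (1 + W))
    (hWnull : ∀ v : Fin N → ℝ, (1 - W).mulVec v = 0 ↔ ∃ c : ℝ, v = fun _ => c)
    (ρ : ℝ) (hρdef : ρ = specNorm (W - (N:ℝ)⁻¹ • onesMat N)) (hρlt : ρ < 1)
    -- `S` is the unique positive semidefinite square root of `I − W`
    (S : Matrix (Fin N) (Fin N) ℝ) (hSpsd : S.PosSemidef) (hSsq : S * S = 1 - W)
    -- objective: `F` is `L`-smooth (gradient `G` w.r.t. the Frobenius inner product)
    -- and bounded below by `flb`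
    (L flb : ℝ) (hL : 0 < L)
    (F : Matrix (Fin N) (Fin p) ℝ → ℝ)
    (G : Matrix (Fin N) (Fin p) ℝ → Matrix (Fin N) (Fin p) ℝ)
    (hgrad : ∀ U, HasFDerivAt F (frobCLM (G U)) U)
    (hLip : ∀ U V, frobNorm (G U - G V) ≤ L * frobNorm (U - V))
    (hlb : ∀ U, flb ≤ F U)
    -- ADAPD iterates with parameter `η` and error tolerances `ε`
    (η : ℝ) (hη : 0 < η)
    (ε : ℕ → ℝ) (hεpos : ∀ k, 0 < ε (k+1)) (hεmono : ∀ k, ε (k+2) ≤ ε (k+1))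
    (X X0 Y Z : ℕ → Matrix (Fin N) (Fin p) ℝ)
    (hZ0 : ∃ U0 : Matrix (Fin N) (Fin p) ℝ, Z 0 = S * U0)
    (hres : ∀ k, frobSq (G (X (k+1)) + Y k + η⁻¹ • (X (k+1) - X0 k)) ≤ ε (k+1))
    (hX0it : ∀ k, X0 (k+1) = (2:ℝ)⁻¹ • (W * X0 k + X (k+1) + η • (Y k - S * Z k)))
    (hYit : ∀ k, Y (k+1) = Y k + η⁻¹ • (X (k+1) - X0 (k+1)))
    (hZit : ∀ k, Z (k+1) = Z k + η⁻¹ • (S * X0 (k+1)))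
    (hη2 : η < 1/(2*L)) :
    ∀ k : ℕ,
      Lag F S η (X (k+1)) (X0 k) (Y k) (Z k) - Lag F S η (X k) (X0 k) (Y k) (Z k)
        ≤ (2*L*η - 1)/(2*η) * frobSq (X (k+1) - X k) + ε (k+1)/(2*L) := by
  intro k
  have hηne : (η:ℝ) ≠ 0 := ne_of_gt hη
  have hresk := hres k
  have h1 := descent_lemma L hL F G hgrad hLip (X k) (X (k+1))
  set X1 := X (k+1) with hX1
  set Xk := X k with hXk
  set X0k := X0 k with hX0k
  set Yk := Y k with hYk
  set Zk := Z k with hZk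
  set Δ := X1 - Xk with hΔ
  set B := Xk - X0k with hBdef
  have hXB : X1 - X0k = B + Δ := by rw [hBdef, hΔ]; abel
  set R := G X1 + Yk + η⁻¹ • (X1 - X0k) with hR
  have hRle : frobSq R ≤ ε (k+1) := hresk
  have hq0 := frobSq_nonneg Δ
  have hLag : Lag F S η X1 X0k Yk Zk - Lag F S η Xk X0k Yk Zk
      = (F X1 - F Xk - frobInner (G X1) Δ) + frobInner R Δ - (2*η)⁻¹ * frobSq Δ := by
    rw [hR, hXB]
    simp only [Lag, hXB, frobSq_add, frobInner_add_right, frobInner_add_left,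
      frobInner_smul_left]
    rw [← hBdef, show frobInner Δ Δ = frobSq Δ from rfl]
    field_simp
    ring
  rw [hLag]
  have h2 : frobInner R Δ ≤ (2*L)⁻¹ * frobSq R + L/2 * frobSq Δ := frob_young L hL R Δ
  have h3 : (2*L)⁻¹ * frobSq R ≤ (2*L)⁻¹ * ε (k+1) := by
    apply mul_le_mul_of_nonneg_left hRle
    positivity
  have hcoef : (2*L*η - 1)/(2*η) * frobSq Δ = L * frobSq Δ - (2*η)⁻¹ * frobSq Δ := by
    field_simp
  have heps : ε (k+1)/(2*L) = (2*L)⁻¹ * ε (k+1) := by ring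
  rw [hcoef, heps]
  linarith


end
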